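/- arXiv:2509.25118 — 4 statements merged into one kernel-verified Lean document; each statement's English description precedes it below -/
import Mathlib

section
/- Let G be a finite group with 𝒥(G) < 2. Then G satisfies the Herzog–Schönheim conjecture: if k ≥ 2, H_1,…,H_k are proper subgroups of G and x_1,…,x_k are elements of G such that G = ⋃_{i=1}^k H_i x_i and H_i x_i ∩ H_j x_j = ∅ for all i ≠ j, then [G:H_i] = [G:H_j] for some i ≠ j. -/
/-- `𝒥(G)`: the sum of the reciprocals of the indices of the subgroups of a finite
group `G`, each distinct index counted exactly once. -/
noncomputable def HSJ (G : Type*) [Group G] [Finite G] : ℝ :=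
  ∑ᶠ m ∈ Set.range (fun H : Subgroup G => H.index), (1 : ℝ) / (m : ℝ)

/-- A finite group `G` with `𝒥(G) < 2` satisfies the Herzog–Schönheim conjecture:
if `k ≥ 2` and the right cosets `H i * x i` of proper subgroups `H i` partition `G`,
then two of the subgroups have the same index. -/
theorem herzog_schonheim_of_HSJ_lt_two (G : Type*) [Group G] [Finite G]
    (hJ : HSJ G < 2)
    (k : ℕ) (hk : 2 ≤ k)
    (H : Fin k → Subgroup G) (hprop : ∀ i, H i ≠ ⊤)
    (x : Fin k → G)
    (hcover : (⋃ i, (· * x i) '' (H i : Set G)) = Set.univ)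
    (hdisj : ∀ i j, i ≠ j →
      ((· * x i) '' (H i : Set G)) ∩ ((· * x j) '' (H j : Set G)) = ∅) :
    ∃ i j, i ≠ j ∧ (H i).index = (H j).index := by
  classical
  by_contra hcon
  push_neg at hcon
  have hinj : Function.Injective (fun i => (H i).index) := by
    intro i j hij
    by_contra hne
    exact hcon i j hne hij
  have := Fintype.ofFinite G
  -- card counting
  set f : Fin k → Finset G := fun i => ((· * x i) '' (H i : Set G)).toFinset with hf
  have hbU : Finset.univ.biUnion f = (Finset.univ : Finset G) := by
    ext g
    simp only [Finset.mem_biUnion, Finset.mem_univ, iff_true, hf, Set.mem_toFinset]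
    have : g ∈ (⋃ i, (· * x i) '' (H i : Set G)) := hcover ▸ Set.mem_univ g
    simpa using this
  have hcard : ∑ i, Nat.card (H i) = Nat.card G := by
    have hdisj' : ∀ i ∈ (Finset.univ : Finset (Fin k)), ∀ j ∈ Finset.univ, i ≠ j →
        Disjoint (f i) (f j) := by
      intro i _ j _ hij
      rw [Finset.disjoint_left]
      intro a ha hb
      have : a ∈ (((· * x i) '' (H i : Set G)) ∩ ((· * x j) '' (H j : Set G))) := by
        simp only [hf, Set.mem_toFinset] at ha hb
        exact ⟨ha, hb⟩
      rw [hdisj i j hij] at this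
      exact this
    have h1 := Finset.card_biUnion hdisj'
    rw [hbU] at h1
    have h2 : ∀ i, (f i).card = Nat.card (H i) := by
      intro i
      have hi : Function.Injective (· * x i) := fun a b hab => mul_right_cancel hab
      rw [hf]
      rw [← Set.ncard_eq_toFinset_card', Set.ncard_image_of_injective _ hi,
        ← Nat.card_coe_set_eq]
      exact Nat.card_congr (Equiv.setCongr rfl)
    rw [Finset.card_univ] at h1
    rw [Nat.card_eq_fintype_card, h1]
    exact Finset.sum_congr rfl (fun i _ => (h2 i).symm)
  have hGpos : 0 < Nat.card G := Nat.card_pos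
  -- sum of reciprocals of indices equals 1
  have hsum : ∑ i, (1 : ℝ) / ((H i).index : ℝ) = 1 := by
    have hterm : ∀ i, (1 : ℝ) / ((H i).index : ℝ)
        = (Nat.card (H i) : ℝ) / (Nat.card G : ℝ) := by
      intro i
      have := (H i).index_mul_card
      have hidx : ((H i).index : ℝ) ≠ 0 :=
        Nat.cast_ne_zero.mpr Subgroup.index_ne_zero_of_finite
      have hG : ((Nat.card G : ℕ) : ℝ) ≠ 0 := Nat.cast_ne_zero.mpr hGpos.ne'
      have h' : Nat.card (H i) * (H i).index = Nat.card G := by rw [mul_comm]; exact this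
      rw [div_eq_div_iff hidx hG, one_mul]
      exact_mod_cast h'.symm
    rw [Finset.sum_congr rfl (fun i _ => hterm i), ← Finset.sum_div]
    rw [← Nat.cast_sum, hcard]
    field_simp
  -- indices are ≠ 1 and ≠ 0
  have hidx1 : ∀ i, (H i).index ≠ 1 := by
    intro i h1
    exact hprop i (Subgroup.index_eq_one.mp h1)
  have hidx0 : ∀ i, (H i).index ≠ 0 := fun i => Subgroup.index_ne_zero_of_finite
  -- HSJ as a finite sum
  set S : Set ℕ := Set.range (fun H : Subgroup G => H.index) with hS
  have hSfin : S.Finite := Set.finite_range _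
  have hHSJ : HSJ G = ∑ m ∈ hSfin.toFinset, (1 : ℝ) / (m : ℝ) := by
    rw [HSJ, ← finsum_mem_coe_finset, Set.Finite.coe_toFinset]
  set T : Finset ℕ := insert 1 (Finset.image (fun i => (H i).index) Finset.univ) with hT
  have hTsub : T ⊆ hSfin.toFinset := by
    intro m hm
    rw [Set.Finite.mem_toFinset]
    rw [hT, Finset.mem_insert] at hm
    rcases hm with rfl | hm
    · exact ⟨⊤, Subgroup.index_top⟩
    · obtain ⟨i, _, rfl⟩ := Finset.mem_image.mp hm
      exact ⟨H i, rfl⟩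
  have hTsum : ∑ m ∈ T, (1 : ℝ) / (m : ℝ) = 2 := by
    rw [hT, Finset.sum_insert (by
      simp only [Finset.mem_image, Finset.mem_univ, true_and]
      rintro ⟨i, hi⟩
      exact hidx1 i hi)]
    rw [Finset.sum_image (fun i _ j _ h => hinj h)]
    rw [hsum]
    norm_num
  have h2le : (2 : ℝ) ≤ HSJ G := by
    rw [hHSJ, ← hTsum]
    apply Finset.sum_le_sum_of_subset_of_nonneg hTsub
    intro m _ _
    positivity
  linarith
end

section
/- Let G be a finite group and let N be a normal subgroup of G. Then 𝒥(G) ≤ 𝒥(N) · 𝒥(G/N). -/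
lemma key_index (G : Type*) [Group G] [Finite G] (N : Subgroup G) [N.Normal]
    (H : Subgroup G) :
    (H.subgroupOf N).index * (H ⊔ N).index = H.index := by
  have h2 : N.relIndex H * (H ⊔ N).index = N.index := by
    rw [← Subgroup.relIndex_sup_right]
    exact Subgroup.relIndex_mul_index le_sup_right
  have h1 : H.relIndex N * N.index = (H ⊓ N).index := by
    rw [← Subgroup.inf_relIndex_right]
    exact Subgroup.relIndex_mul_index inf_le_right
  have h3 : N.relIndex H * H.index = (N ⊓ H).index := by
    rw [← Subgroup.inf_relIndex_right]
    exact Subgroup.relIndex_mul_index inf_le_right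
  have hne : 0 < N.relIndex H := Nat.pos_of_ne_zero (Subgroup.index_ne_zero_of_finite (H := N.subgroupOf H))
  have : N.relIndex H * (H.relIndex N * (H ⊔ N).index) = N.relIndex H * H.index := by
    calc N.relIndex H * (H.relIndex N * (H ⊔ N).index)
        = H.relIndex N * (N.relIndex H * (H ⊔ N).index) := by ring
      _ = H.relIndex N * N.index := by rw [h2]
      _ = (H ⊓ N).index := h1
      _ = (N ⊓ H).index := by rw [inf_comm]
      _ = N.relIndex H * H.index := h3.symm
  exact Nat.eq_of_mul_eq_mul_left hne this

/-- For a finite group `G` and a normal subgroup `N ⊴ G`, one has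
`𝒥(G) ≤ 𝒥(N) * 𝒥(G/N)`. -/
theorem HSJ_le_HSJ_mul_HSJ_quotient (G : Type*) [Group G] [Finite G]
    (N : Subgroup G) [N.Normal] :
    HSJ G ≤ HSJ N * HSJ (G ⧸ N) := by
  classical
  have hA : (Set.range (fun H : Subgroup N => H.index)).Finite := Set.finite_range _
  have hB : (Set.range (fun H : Subgroup (G ⧸ N) => H.index)).Finite := Set.finite_range _
  have hC : (Set.range (fun H : Subgroup G => H.index)).Finite := Set.finite_range _
  rw [HSJ, HSJ, HSJ, ← hA.coe_toFinset, ← hB.coe_toFinset, ← hC.coe_toFinset,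
    finsum_mem_coe_finset, finsum_mem_coe_finset, finsum_mem_coe_finset]
  set sA := hA.toFinset
  set sB := hB.toFinset
  set sC := hC.toFinset
  -- the choice function
  set f : ℕ → ℕ × ℕ := fun m =>
    if h : ∃ H : Subgroup G, H.index = m then
      (((Classical.choose h).subgroupOf N).index,
        ((Classical.choose h).map (QuotientGroup.mk' N)).index)
    else (m, 1) with hf
  have hmk : ∀ H : Subgroup G, (H.map (QuotientGroup.mk' N)).index = (H ⊔ N).index := by
    intro H
    rw [Subgroup.index_map, QuotientGroup.ker_mk',
      MonoidHom.range_eq_top_of_surjective _ (QuotientGroup.mk'_surjective N),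
      Subgroup.index_top, mul_one]
  have hprod : ∀ m ∈ sC, (f m).1 * (f m).2 = m := by
    intro m hm
    have hm' : ∃ H : Subgroup G, H.index = m := by
      simpa [sC, Set.Finite.mem_toFinset] using hm
    simp only [hf, dif_pos hm']
    rw [hmk, key_index G N, Classical.choose_spec hm']
  have hmemA : ∀ m ∈ sC, (f m).1 ∈ sA := by
    intro m hm
    have hm' : ∃ H : Subgroup G, H.index = m := by
      simpa [sC, Set.Finite.mem_toFinset] using hm
    simp only [hf, dif_pos hm']
    simp [sA, Set.Finite.mem_toFinset]
  have hmemB : ∀ m ∈ sC, (f m).2 ∈ sB := by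
    intro m hm
    have hm' : ∃ H : Subgroup G, H.index = m := by
      simpa [sC, Set.Finite.mem_toFinset] using hm
    simp only [hf, dif_pos hm']
    simp [sB, Set.Finite.mem_toFinset]
  have hinj : Set.InjOn f sC := by
    intro m hm m' hm' h
    rw [← hprod m hm, ← hprod m' hm', h]
  calc (∑ m ∈ sC, (1 : ℝ) / (m : ℝ))
      = ∑ m ∈ sC, ((1 : ℝ) / ((f m).1 : ℝ)) * ((1 : ℝ) / ((f m).2 : ℝ)) := by
        apply Finset.sum_congr rfl
        intro m hm
        rw [div_mul_div_comm, one_mul, ← Nat.cast_mul, hprod m hm]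
    _ = ∑ p ∈ sC.image f, ((1 : ℝ) / (p.1 : ℝ)) * ((1 : ℝ) / (p.2 : ℝ)) :=
        by
        exact (Finset.sum_image (g := f) (f := fun p : ℕ × ℕ => ((1:ℝ)/(p.1:ℝ)) * ((1:ℝ)/(p.2:ℝ))) (fun x hx y hy h => hinj hx hy h)).symm
    _ ≤ ∑ p ∈ sA ×ˢ sB, ((1 : ℝ) / (p.1 : ℝ)) * ((1 : ℝ) / (p.2 : ℝ)) := by
        apply Finset.sum_le_sum_of_subset_of_nonneg
        · intro p hp
          obtain ⟨m, hm, rfl⟩ := Finset.mem_image.mp hp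
          exact Finset.mem_product.mpr ⟨hmemA m hm, hmemB m hm⟩
        · intro p _ _
          positivity
    _ = (∑ a ∈ sA, (1 : ℝ) / (a : ℝ)) * ∑ b ∈ sB, (1 : ℝ) / (b : ℝ) := by
        rw [Finset.sum_mul_sum sA sB (fun a => (1:ℝ)/(a:ℝ)) (fun b => (1:ℝ)/(b:ℝ))]
        exact Finset.sum_product _ _ _
end

section
/- For every positive integer m, √(2πm) · (m/e)^m · e^{1/(12m+1)} < m! < √(2πm) · (m/e)^m · e^{1/(12m)}. -/
open Real Filter Stirling Topology

private lemma two_add_three_le (k : ℕ) : (2 * k + 3 : ℝ) ≤ 3 ^ (k + 1) := by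
  induction k with
  | zero => norm_num
  | succ n ih =>
    have h3 : (1 : ℝ) ≤ 3 ^ (n + 1) := one_le_pow₀ (by norm_num)
    push_cast at ih ⊢
    calc (2 * ((n : ℝ) + 1) + 3) = (2 * n + 3) + 2 := by ring
      _ ≤ 3 ^ (n + 1) + 2 * 3 ^ (n + 1) := by nlinarith
      _ = 3 ^ (n + 1 + 1) := by ring

private lemma sum_bounds {t S : ℝ} (h0 : 0 < t) (h1 : t < 1)
    (hS : HasSum (fun k : ℕ => 1 / (2 * (k : ℝ) + 3) * t ^ (k + 1)) S) :
    t / (3 - t) < S ∧ S < t / (3 * (1 - t)) := by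
  have ht3 : t / 3 < 1 := by linarith
  constructor
  · -- lower bound via geometric series with ratio t/3
    have hg : HasSum (fun k : ℕ => t / 3 * (t / 3) ^ k) (t / 3 * (1 - t / 3)⁻¹) :=
      (hasSum_geometric_of_lt_one (by positivity) ht3).mul_left (t / 3)
    have hle : ∀ k : ℕ, t / 3 * (t / 3) ^ k ≤ 1 / (2 * (k : ℝ) + 3) * t ^ (k + 1) := by
      intro k
      have e1 : t / 3 * (t / 3) ^ k = t ^ (k + 1) / 3 ^ (k + 1) := by
        rw [div_pow, pow_succ']; ring
      have e2 : (1 : ℝ) / (2 * (k : ℝ) + 3) * t ^ (k + 1) = t ^ (k + 1) / (2 * (k : ℝ) + 3) := by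
        ring
      rw [e1, e2]
      gcongr
      all_goals first
        | positivity
        | exact pow_nonneg h0.le _
        | exact two_add_three_le k
    have hi : t / 3 * (t / 3) ^ 1 < 1 / (2 * ((1 : ℕ) : ℝ) + 3) * t ^ (1 + 1) := by
      push_cast
      have : (0 : ℝ) < t ^ 2 := pow_pos h0 2
      have e1 : t / 3 * (t / 3) ^ 1 = t ^ 2 / 9 := by ring
      have e2 : (1 : ℝ) / (2 * 1 + 3) * t ^ (1 + 1) = t ^ 2 / 5 := by norm_num; ring
      rw [e1, e2]
      linarith
    have hlt := hasSum_lt hle hi hg hS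
    refine lt_of_le_of_lt (le_of_eq ?_) hlt
    have h3t : (3 : ℝ) - t ≠ 0 := by linarith
    have h3t3 : (1 : ℝ) - t / 3 ≠ 0 := by intro h; apply h3t; linarith [h]
    field_simp
    try ring
  · -- upper bound via geometric series with ratio t, coefficient 1/3
    have hg : HasSum (fun k : ℕ => t / 3 * t ^ k) (t / 3 * (1 - t)⁻¹) :=
      (hasSum_geometric_of_lt_one h0.le h1).mul_left (t / 3)
    have hle : ∀ k : ℕ, 1 / (2 * (k : ℝ) + 3) * t ^ (k + 1) ≤ t / 3 * t ^ k := by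
      intro k
      have e1 : t / 3 * t ^ k = 1 / 3 * t ^ (k + 1) := by rw [pow_succ']; ring
      rw [e1]
      apply mul_le_mul_of_nonneg_right _ (pow_nonneg h0.le _)
      apply div_le_div_of_nonneg_left one_pos.le (by norm_num)
      have : (0 : ℝ) ≤ k := Nat.cast_nonneg k
      linarith
    have hi : 1 / (2 * ((1 : ℕ) : ℝ) + 3) * t ^ (1 + 1) < t / 3 * t ^ 1 := by
      push_cast
      have : (0 : ℝ) < t ^ 2 := pow_pos h0 2
      have e1 : t / 3 * t ^ 1 = t ^ 2 / 3 := by ring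
      have e2 : (1 : ℝ) / (2 * 1 + 3) * t ^ (1 + 1) = t ^ 2 / 5 := by norm_num; ring
      rw [e1, e2]
      linarith
    have h1t : (1 : ℝ) - t ≠ 0 := by linarith
    have heq : t / 3 * (1 - t)⁻¹ = t / (3 * (1 - t)) := by
      field_simp
      try ring
    exact heq ▸ hasSum_lt hle hi hS hg

private lemma diff_bounds (n : ℕ) :
    (1 / (12 * ((n : ℝ) + 1) + 1) - 1 / (12 * ((n : ℝ) + 2) + 1) <
      log (stirlingSeq (n + 1)) - log (stirlingSeq (n + 2))) ∧
    (log (stirlingSeq (n + 1)) - log (stirlingSeq (n + 2)) <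
      1 / (12 * ((n : ℝ) + 1)) - 1 / (12 * ((n : ℝ) + 2))) := by
  have ha : (0 : ℝ) ≤ n := Nat.cast_nonneg n
  have hxpos : (0 : ℝ) < 2 * (n : ℝ) + 3 := by linarith
  have hx9 : (9 : ℝ) ≤ (2 * (n : ℝ) + 3) ^ 2 := by nlinarith
  have h0 : (0 : ℝ) < 1 / (2 * (n : ℝ) + 3) ^ 2 := by positivity
  have h1 : (1 : ℝ) / (2 * (n : ℝ) + 3) ^ 2 < 1 := by
    rw [div_lt_one (by positivity)]; linarith
  have hS : HasSum (fun k : ℕ => 1 / (2 * (k : ℝ) + 3) * (1 / (2 * (n : ℝ) + 3) ^ 2) ^ (k + 1))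
      (log (stirlingSeq (n + 1)) - log (stirlingSeq (n + 2))) := by
    convert log_stirlingSeq_diff_hasSum n using 2 with k
    push_cast
    have hne : (2 * (n : ℝ) + 3) ≠ 0 := by positivity
    have hne2 : (2 * (k : ℝ) + 3) ≠ 0 := by positivity
    field_simp
    ring
  obtain ⟨hlo, hhi⟩ := sum_bounds h0 h1 hS
  have hd1 : (0 : ℝ) < 12 * ((n : ℝ) + 1) + 1 := by linarith
  have hd2 : (0 : ℝ) < 12 * ((n : ℝ) + 2) + 1 := by linarith
  have hd3 : (0 : ℝ) < 12 * ((n : ℝ) + 1) := by linarith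
  have hd4 : (0 : ℝ) < 12 * ((n : ℝ) + 2) := by linarith
  constructor
  · refine lt_of_le_of_lt ?_ hlo
    have hx2 : (0 : ℝ) < (2 * (n : ℝ) + 3) ^ 2 := by positivity
    have heq : (1 / (2 * (n : ℝ) + 3) ^ 2) / (3 - 1 / (2 * (n : ℝ) + 3) ^ 2)
        = 1 / (3 * (2 * (n : ℝ) + 3) ^ 2 - 1) := by
      have hne : (2 * (n : ℝ) + 3) ≠ 0 := by positivity
      rw [div_eq_div_iff (by nlinarith) (by nlinarith)]
      field_simp
      try ring
    rw [heq]
    rw [div_sub_div _ _ hd1.ne' hd2.ne', div_le_div_iff₀ (by positivity) (by nlinarith)]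
    nlinarith
  · refine lt_of_lt_of_le hhi ?_
    have hx2 : (0 : ℝ) < (2 * (n : ℝ) + 3) ^ 2 := by positivity
    have heq : (1 / (2 * (n : ℝ) + 3) ^ 2) / (3 * (1 - 1 / (2 * (n : ℝ) + 3) ^ 2))
        = 1 / (3 * (2 * (n : ℝ) + 3) ^ 2 - 3) := by
      have hne : (2 * (n : ℝ) + 3) ≠ 0 := by positivity
      rw [div_eq_div_iff (by nlinarith) (by nlinarith)]
      field_simp
      try ring
    rw [heq]
    rw [div_sub_div _ _ hd3.ne' hd4.ne', div_le_div_iff₀ (by nlinarith) (by positivity)]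
    nlinarith

private lemma stirling_log_bounds (m : ℕ) (hm : 0 < m) :
    Real.log (Real.sqrt Real.pi) + 1 / (12 * (m : ℝ) + 1) < log (stirlingSeq m) ∧
    log (stirlingSeq m) < Real.log (Real.sqrt Real.pi) + 1 / (12 * (m : ℝ)) := by
  obtain ⟨n, rfl⟩ := Nat.exists_eq_add_of_lt hm
  rw [zero_add]
  set L := Real.log (Real.sqrt Real.pi) with hL
  have hπ : (0 : ℝ) < Real.sqrt Real.pi := Real.sqrt_pos.mpr Real.pi_pos
  have hlim : Tendsto (fun k : ℕ => log (stirlingSeq (k + 1))) atTop (𝓝 L) := by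
    have h1 : Tendsto (fun k : ℕ => stirlingSeq (k + 1)) atTop (𝓝 (Real.sqrt Real.pi)) :=
      tendsto_stirlingSeq_sqrt_pi.comp (tendsto_add_atTop_nat 1)
    exact (Real.continuousAt_log hπ.ne').tendsto.comp h1
  have hzero : ∀ c : ℝ, Tendsto (fun k : ℕ => 1 / (12 * ((k : ℝ) + 1) + c)) atTop (𝓝 0) := by
    intro c
    have h : Tendsto (fun k : ℕ => 12 * ((k : ℝ) + 1) + c) atTop atTop := by
      apply tendsto_atTop_add_const_right
      apply Tendsto.const_mul_atTop (by norm_num : (0 : ℝ) < 12)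
      exact tendsto_atTop_add_const_right _ _ tendsto_natCast_atTop_atTop
    simpa [one_div, Function.comp_def] using tendsto_inv_atTop_zero.comp h
  constructor
  · set v : ℕ → ℝ := fun k => log (stirlingSeq (k + 1)) - 1 / (12 * ((k : ℝ) + 1) + 1) with hv
    have hanti : StrictAnti v := by
      apply strictAnti_nat_of_succ_lt
      intro k
      have h := (diff_bounds k).1
      simp only [hv]
      push_cast
      have e2 : (((k : ℝ) + 1) + 1) = (k : ℝ) + 2 := by ring
      rw [e2]
      linarith
    have hvlim : Tendsto v atTop (𝓝 L) := by
      have h := hlim.sub (hzero 1)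
      simp only [sub_zero] at h
      exact h
    have h2 : L ≤ v (n + 1) := hanti.antitone.le_of_tendsto hvlim (n + 1)
    have hlt : v (n + 1) < v n := hanti (Nat.lt_succ_self n)
    simp only [hv] at h2 hlt ⊢
    push_cast at h2 hlt ⊢
    linarith
  · set u : ℕ → ℝ := fun k => log (stirlingSeq (k + 1)) - 1 / (12 * ((k : ℝ) + 1)) with hu
    have hmono : StrictMono u := by
      apply strictMono_nat_of_lt_succ
      intro k
      have h := (diff_bounds k).2
      simp only [hu]
      push_cast
      have e2 : (((k : ℝ) + 1) + 1) = (k : ℝ) + 2 := by ring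
      rw [e2]
      linarith
    have hulim : Tendsto u atTop (𝓝 L) := by
      have h := hlim.sub (hzero 0)
      simp only [sub_zero, add_zero] at h
      exact h
    have h2 : u (n + 1) ≤ L := hmono.monotone.ge_of_tendsto hulim (n + 1)
    have hlt : u n < u (n + 1) := hmono (Nat.lt_succ_self n)
    simp only [hu] at h2 hlt ⊢
    push_cast at h2 hlt ⊢
    linarith

/-- Stirling's inequalities: for every positive integer `m`,
`√(2πm) (m/e)^m e^{1/(12m+1)} < m! < √(2πm) (m/e)^m e^{1/(12m)}`. -/
theorem stirling_inequalities (m : ℕ) (hm : 0 < m) :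
    Real.sqrt (2 * Real.pi * m) * ((m : ℝ) / Real.exp 1) ^ m *
        Real.exp (1 / (12 * (m : ℝ) + 1)) < (m.factorial : ℝ) ∧
      (m.factorial : ℝ) <
        Real.sqrt (2 * Real.pi * m) * ((m : ℝ) / Real.exp 1) ^ m *
          Real.exp (1 / (12 * (m : ℝ))) := by
  obtain ⟨hlo, hhi⟩ := stirling_log_bounds m hm
  have hπ : (0 : ℝ) < Real.sqrt Real.pi := Real.sqrt_pos.mpr Real.pi_pos
  have hmR : (0 : ℝ) < m := Nat.cast_pos.mpr hm
  have hc : (0 : ℝ) < Real.sqrt (2 * m) * ((m : ℝ) / Real.exp 1) ^ m := by positivity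
  have hs : (0 : ℝ) < stirlingSeq m := by
    obtain ⟨n, rfl⟩ := Nat.exists_eq_add_of_lt hm
    rw [zero_add]
    exact stirlingSeq'_pos n
  have key : ∀ a : ℝ, Real.log (Real.sqrt Real.pi) + a < log (stirlingSeq m) →
      Real.sqrt Real.pi * Real.exp a < stirlingSeq m := by
    intro a h
    calc Real.sqrt Real.pi * Real.exp a = Real.exp (Real.log (Real.sqrt Real.pi) + a) := by
          rw [Real.exp_add, Real.exp_log hπ]
      _ < Real.exp (log (stirlingSeq m)) := Real.exp_lt_exp.mpr h
      _ = stirlingSeq m := Real.exp_log hs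
  have key2 : ∀ a : ℝ, log (stirlingSeq m) < Real.log (Real.sqrt Real.pi) + a →
      stirlingSeq m < Real.sqrt Real.pi * Real.exp a := by
    intro a h
    calc stirlingSeq m = Real.exp (log (stirlingSeq m)) := (Real.exp_log hs).symm
      _ < Real.exp (Real.log (Real.sqrt Real.pi) + a) := Real.exp_lt_exp.mpr h
      _ = Real.sqrt Real.pi * Real.exp a := by rw [Real.exp_add, Real.exp_log hπ]
  have h1 := key _ hlo
  have h2 := key2 _ hhi
  have hfac : (m.factorial : ℝ)
      = stirlingSeq m * (Real.sqrt (2 * m) * ((m : ℝ) / Real.exp 1) ^ m) := by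
    rw [stirlingSeq]
    field_simp
  have hsqrt : Real.sqrt (2 * Real.pi * m) = Real.sqrt Real.pi * Real.sqrt (2 * m) := by
    rw [← Real.sqrt_mul Real.pi_pos.le]
    congr 1
    ring
  constructor
  · calc Real.sqrt (2 * Real.pi * m) * ((m : ℝ) / Real.exp 1) ^ m *
        Real.exp (1 / (12 * (m : ℝ) + 1))
        = (Real.sqrt Real.pi * Real.exp (1 / (12 * (m : ℝ) + 1))) *
          (Real.sqrt (2 * m) * ((m : ℝ) / Real.exp 1) ^ m) := by rw [hsqrt]; ring
      _ < stirlingSeq m * (Real.sqrt (2 * m) * ((m : ℝ) / Real.exp 1) ^ m) :=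
          mul_lt_mul_of_pos_right h1 hc
      _ = (m.factorial : ℝ) := hfac.symm
  · calc (m.factorial : ℝ)
        = stirlingSeq m * (Real.sqrt (2 * m) * ((m : ℝ) / Real.exp 1) ^ m) := hfac
      _ < (Real.sqrt Real.pi * Real.exp (1 / (12 * (m : ℝ)))) *
          (Real.sqrt (2 * m) * ((m : ℝ) / Real.exp 1) ^ m) := mul_lt_mul_of_pos_right h2 hc
      _ = Real.sqrt (2 * Real.pi * m) * ((m : ℝ) / Real.exp 1) ^ m *
          Real.exp (1 / (12 * (m : ℝ))) := by rw [hsqrt]; ring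
end

section
/- Let p_1 < p_2 < … be the prime numbers in increasing order and for each n let G_n be the cyclic group of order p_1 · p_2 ⋯ p_n. Then 𝒥(G_n) ≥ ∑_{i=1}^{n} 1/p_i, and consequently 𝒥(G_n) → ∞ as n → ∞; in particular, 𝒥 is unbounded on the class of finite groups. -/
/-- In a finite cyclic group, every divisor of the order is the index of some subgroup. -/
lemma exists_index_eq {G : Type*} [Group G] [Finite G] (hc : IsCyclic G)
    {p : ℕ} (hp : p ≠ 0) (hdvd : p ∣ Nat.card G) : ∃ H : Subgroup G, H.index = p := by
  obtain ⟨g, hg⟩ := hc.exists_ofOrder_eq_natCard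
  refine ⟨Subgroup.zpowers (g ^ p), ?_⟩
  have hN : Nat.card G ≠ 0 := Nat.card_pos.ne'
  have hcard : Nat.card (Subgroup.zpowers (g ^ p)) = Nat.card G / p := by
    rw [Nat.card_zpowers, orderOf_pow, hg, Nat.gcd_eq_right hdvd]
  have hmul := Subgroup.card_mul_index (Subgroup.zpowers (g ^ p))
  rw [hcard] at hmul
  have hq : Nat.card G / p ≠ 0 := by
    exact Nat.div_ne_zero_iff.mpr ⟨hp, Nat.le_of_dvd Nat.card_pos hdvd⟩
  have : Nat.card G / p * (Subgroup.zpowers (g ^ p)).index = Nat.card G / p * p := by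
    rw [hmul, Nat.div_mul_cancel hdvd]
  exact Nat.eq_of_mul_eq_mul_left (Nat.pos_of_ne_zero hq) this

/-- Let `p_1 < p_2 < …` be the primes in increasing order (here `Nat.nth Nat.Prime i`
is `p_{i+1}`) and let `G n` be a cyclic group of order `p_1 ⋯ p_n`. Then
`𝒥(G n) ≥ ∑_{i=1}^{n} 1/p_i`; consequently `𝒥(G n) → ∞` as `n → ∞`, so `𝒥` is
unbounded on the class of finite groups. -/
theorem HSJ_primorial_cyclic_unbounded (G : ℕ → Type*) [∀ n, Group (G n)]
    [∀ n, Finite (G n)] (hcyc : ∀ n, IsCyclic (G n))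
    (hcard : ∀ n, Nat.card (G n) = ∏ i ∈ Finset.range n, Nat.nth Nat.Prime i) :
    (∀ n, (∑ i ∈ Finset.range n, (1 : ℝ) / (Nat.nth Nat.Prime i : ℝ)) ≤ HSJ (G n)) ∧
      Filter.Tendsto (fun n => HSJ (G n)) Filter.atTop Filter.atTop ∧
      ∀ C : ℝ, ∃ n, C < HSJ (G n) := by
  have hinj : Function.Injective (Nat.nth Nat.Prime) :=
    Nat.nth_injective Nat.infinite_setOf_prime
  have key : ∀ n, (∑ i ∈ Finset.range n, (1 : ℝ) / (Nat.nth Nat.Prime i : ℝ)) ≤ HSJ (G n) := by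
    intro n
    have hfin : (Set.range fun H : Subgroup (G n) => H.index).Finite := Set.finite_range _
    rw [HSJ, ← hfin.coe_toFinset, finsum_mem_coe_finset]
    rw [← Finset.sum_image (f := fun m : ℕ => (1 : ℝ) / m)
      (g := Nat.nth Nat.Prime) (fun x _ y _ h => hinj h)]
    refine Finset.sum_le_sum_of_subset_of_nonneg ?_ (fun m _ _ => by positivity)
    intro m hm
    obtain ⟨i, hi, rfl⟩ := Finset.mem_image.mp hm
    have hp : (Nat.nth Nat.Prime i).Prime := Nat.prime_nth_prime i
    have hdvd : Nat.nth Nat.Prime i ∣ Nat.card (G n) := by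
      rw [hcard n]
      exact Finset.dvd_prod_of_mem _ (Finset.mem_range.mp hi |> Finset.mem_range.mpr)
    obtain ⟨H, hH⟩ := exists_index_eq (hcyc n) hp.ne_zero hdvd
    simp only [Set.Finite.mem_toFinset, Set.mem_range]
    exact ⟨H, hH⟩
  have htend : Filter.Tendsto (fun n => HSJ (G n)) Filter.atTop Filter.atTop := by
    have hns : ¬ Summable (fun i => (1 : ℝ) / (Nat.nth Nat.Prime i : ℝ)) := by
      intro h
      apply not_summable_one_div_on_primes
      rw [← Function.Injective.summable_iff hinj (f := Set.indicator {p | p.Prime}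
        (fun n : ℕ => (1 : ℝ) / n)) ?_]
      · convert h using 1
        funext i
        exact Set.indicator_of_mem (Nat.prime_nth_prime i) _
      · intro x hx
        apply Set.indicator_of_notMem
        rwa [← Nat.range_nth_of_infinite Nat.infinite_setOf_prime]
    have hdiv : Filter.Tendsto
        (fun n => ∑ i ∈ Finset.range n, (1 : ℝ) / (Nat.nth Nat.Prime i : ℝ))
        Filter.atTop Filter.atTop := by
      have := (summable_iff_not_tendsto_nat_atTop_of_nonneg
        (f := fun i => (1 : ℝ) / (Nat.nth Nat.Prime i : ℝ)) (fun i => by positivity))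
      by_contra hcon
      exact hns (this.mpr hcon)
    exact Filter.tendsto_atTop_mono key hdiv
  exact ⟨key, htend, fun C => (htend.eventually_gt_atTop C).exists⟩
end
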